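/- Let σ = [v₀,…,v_{n−1}] and σ' = [v'₀,…,v'_{n−1}] be two adjacent flag simplices of the standard subdivision lying in a common (n−1)-plane, with v_i = v'_i for all i ≠ k for some 0 < k < n−1, arising from flags (Q₀,…,Q_{n−1}) and (Q'₀,…,Q'_{n−1}) where Q_k and Q'_k share the face Q_{k−1} and are both contained in Q_{k+1}. Then v'_k − v_{n−1} = −(v_k − v_{n−1}) + (v_{k−1} − v_{n−1}) + (v_{k+1} − v_{n−1}), and consequently (v'₀ − v_{n−1}) ∧ ⋯ ∧ (v'_{n−2} − v_{n−1}) = −(v₀ − v_{n−1}) ∧ ⋯ ∧ (v_{n−2} − v_{n−1}). -/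
import Mathlib


/-- Barycenter of the `k`-dimensional face `Q_k` of the flag of faces of the cube `[0,1]^m`
(a congruent model of an `(n−1)`-cube lying in an `(n−1)`-plane, `m = n − 1`) encoded by
`(π, ε)`: `π` records the order in which coordinates become free, `ε i ∈ {0,1}` the value of
coordinate `i` while fixed.  A barycenter determines its face, so two flags agreeing at all
indices `j ≠ k` share all faces `Q_j`, `j ≠ k`; in particular `Q_k` and `Q'_k` share the
face `Q_{k−1}` and are both contained in `Q_{k+1}`. -/
noncomputable def flagBarycenter {m : ℕ} (π : Equiv.Perm (Fin m)) (ε : Fin m → Bool)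
    (k : Fin (m + 1)) : Fin m → ℝ :=
  fun i => if ((π.symm i : ℕ) < (k : ℕ)) then 1 / 2 else (if ε i then 1 else 0)


private lemma aux_wedge {m : ℕ} (f g : Fin m → (Fin m → ℝ)) (p q : Fin m) (c : Fin m → ℝ)
    (hpq : q ≠ p)
    (hfg : ∀ i, i ≠ p → g i = f i)
    (hgp : g p = -(f p) + f q + c)
    (hc : c = 0 ∨ ∃ r : Fin m, r ≠ p ∧ c = f r) :
    ExteriorAlgebra.ιMulti ℝ m g = - ExteriorAlgebra.ιMulti ℝ m f := by
  have hupd : g = Function.update f p (g p) := by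
    funext i
    by_cases hi : i = p
    · subst hi; rw [Function.update_self]
    · rw [Function.update_of_ne hi]; exact hfg i hi
  rw [hupd, hgp, AlternatingMap.map_update_add, AlternatingMap.map_update_add,
    AlternatingMap.map_update_neg, Function.update_eq_self]
  have h1 : ExteriorAlgebra.ιMulti ℝ m (Function.update f p (f q)) = 0 :=
    AlternatingMap.map_eq_zero_of_eq _ _ (i := p) (j := q)
      (by rw [Function.update_self, Function.update_of_ne hpq]) (Ne.symm hpq)
  have h2 : ExteriorAlgebra.ιMulti ℝ m (Function.update f p c) = 0 := by
    rcases hc with rfl | ⟨r, hr, rfl⟩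
    · exact AlternatingMap.map_update_zero _ _ _
    · exact AlternatingMap.map_eq_zero_of_eq _ _ (i := p) (j := r)
        (by rw [Function.update_self, Function.update_of_ne hr]) (Ne.symm hr)
  rw [h1, h2]; abel

set_option maxHeartbeats 1000000 in
/-- Two adjacent flag simplices `σ = [v₀,…,v_m]`, `σ' = [v'₀,…,v'_m]` in a common plane with
`v_i = v'_i` for `i ≠ k`, `0 < k < m`, satisfy
`v'_k − v_m = −(v_k − v_m) + (v_{k−1} − v_m) + (v_{k+1} − v_m)`, and consequently
`(v'₀ − v'_m) ∧ ⋯ ∧ (v'_{m−1} − v'_m) = −(v₀ − v_m) ∧ ⋯ ∧ (v_{m−1} − v_m)`. -/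
theorem stmt9 (m k : ℕ) (hk0 : 0 < k) (hkm : k < m)
    (π π' : Equiv.Perm (Fin m)) (ε ε' : Fin m → Bool)
    (hagree : ∀ j : Fin (m + 1), (j : ℕ) ≠ k →
      flagBarycenter π ε j = flagBarycenter π' ε' j)
    (hne : flagBarycenter π ε ⟨k, by omega⟩ ≠ flagBarycenter π' ε' ⟨k, by omega⟩) :
    (flagBarycenter π' ε' ⟨k, by omega⟩ - flagBarycenter π ε (Fin.last m) =
      -(flagBarycenter π ε ⟨k, by omega⟩ - flagBarycenter π ε (Fin.last m)) +
        (flagBarycenter π ε ⟨k - 1, by omega⟩ - flagBarycenter π ε (Fin.last m)) +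
        (flagBarycenter π ε ⟨k + 1, by omega⟩ - flagBarycenter π ε (Fin.last m))) ∧
    ExteriorAlgebra.ιMulti ℝ m
        (fun i : Fin m =>
          flagBarycenter π' ε' i.castSucc - flagBarycenter π' ε' (Fin.last m)) =
      - ExteriorAlgebra.ιMulti ℝ m
        (fun i : Fin m =>
          flagBarycenter π ε i.castSucc - flagBarycenter π ε (Fin.last m)) := by
  have half_ne : ∀ b : Bool, (1 / 2 : ℝ) ≠ (if b then 1 else 0) := by
    intro b; cases b <;> norm_num
  -- the ε's agree
  have hε : ∀ i, ε' i = ε i := by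
    intro i
    have h0 := congrFun (hagree ⟨0, by omega⟩ hk0.ne) i
    simp only [flagBarycenter, Nat.not_lt_zero, if_false] at h0
    cases h1 : ε' i <;> cases h2 : ε i <;> simp [h1, h2] at h0 ⊢ <;> norm_num at h0
  -- agreement of the "free coordinate" sets away from k
  have hset : ∀ j : ℕ, j ≤ m → j ≠ k → ∀ i : Fin m,
      ((π.symm i : ℕ) < j ↔ ((π'.symm i : ℕ) < j)) := by
    intro j hj hjk i
    have h := congrFun (hagree ⟨j, by omega⟩ hjk) i
    simp only [flagBarycenter] at h
    constructor <;> intro hlt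
    · by_contra hlt'
      rw [if_pos hlt, if_neg hlt'] at h
      exact half_ne (ε' i) h
    · by_contra hlt'
      rw [if_neg hlt', if_pos hlt] at h
      exact half_ne (ε i) h.symm
  set a : Fin m := π ⟨k - 1, by omega⟩ with ha
  set b : Fin m := π ⟨k, by omega⟩ with hb
  have hsa : (π.symm a : ℕ) = k - 1 := by rw [ha, Equiv.symm_apply_apply]
  have hsb : (π.symm b : ℕ) = k := by rw [hb, Equiv.symm_apply_apply]
  have hab : a ≠ b := by
    intro h
    have := π.injective (ha ▸ hb ▸ h)
    have := congrArg Fin.val this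
    simp at this; omega
  -- localize π'.symm a and π'.symm b
  have hbound : ∀ c : Fin m, (π.symm c : ℕ) = k - 1 ∨ (π.symm c : ℕ) = k →
      k - 1 ≤ (π'.symm c : ℕ) ∧ (π'.symm c : ℕ) ≤ k := by
    intro c hc
    have h1 := hset (k - 1) (by omega) (by omega) c
    have h2 := hset (k + 1) (by omega) (by omega) c
    constructor
    · by_contra h; push_neg at h
      have := h1.mpr (by omega); omega
    · have := h2.mp (by omega); omega
  have hA := hbound a (Or.inl hsa)
  have hB := hbound b (Or.inr hsb)
  -- π'.symm b must be k - 1 (otherwise the two barycenters at level k coincide)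
  have hsb' : (π'.symm b : ℕ) = k - 1 := by
    by_contra hcon
    have hbk : (π'.symm b : ℕ) = k := by omega
    have hak : (π'.symm a : ℕ) = k - 1 := by
      have hne' : π'.symm a ≠ π'.symm b := fun h => hab (π'.symm.injective h)
      have : (π'.symm a : ℕ) ≠ (π'.symm b : ℕ) := fun h => hne' (Fin.ext h)
      omega
    apply hne
    funext i
    have hiff : ((π.symm i : ℕ) < k ↔ ((π'.symm i : ℕ) < k)) := by
      constructor <;> intro h
      · rcases Nat.lt_or_ge (π.symm i : ℕ) (k - 1) with h' | h'
        · have := (hset (k - 1) (by omega) (by omega) i).mp h'; omega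
        · have hi : (π.symm i : ℕ) = k - 1 := by omega
          have : i = a := by
            rw [ha]
            have : π.symm i = ⟨k - 1, by omega⟩ := Fin.ext (by simpa using hi)
            rw [← this, Equiv.apply_symm_apply]
          rw [this]; omega
      · rcases Nat.lt_or_ge (π'.symm i : ℕ) (k - 1) with h' | h'
        · have := (hset (k - 1) (by omega) (by omega) i).mpr h'; omega
        · have hi : (π'.symm i : ℕ) = k - 1 := by omega
          have : i = a := by
            have : π'.symm i = π'.symm a := Fin.ext (by simp [hi, hak])
            exact π'.symm.injective this
          rw [this]; omega
    simp only [flagBarycenter]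
    rcases Nat.lt_or_ge (π.symm i : ℕ) k with h | h
    · rw [if_pos h, if_pos (hiff.mp h)]
    · have h' : ¬ ((π'.symm i : ℕ) < k) := fun hc => absurd (hiff.mpr hc) (by omega)
      rw [if_neg (by omega), if_neg h', hε]
  have hsa' : (π'.symm a : ℕ) = k := by
    have hne' : π'.symm a ≠ π'.symm b := fun h => hab (π'.symm.injective h)
    have : (π'.symm a : ℕ) ≠ (π'.symm b : ℕ) := fun h => hne' (Fin.ext h)
    omega
  -- the pointwise key identity
  have key : ∀ i : Fin m,
      flagBarycenter π' ε' ⟨k, by omega⟩ i =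
        flagBarycenter π ε ⟨k - 1, by omega⟩ i + flagBarycenter π ε ⟨k + 1, by omega⟩ i -
          flagBarycenter π ε ⟨k, by omega⟩ i := by
    intro i
    have h1 := hset (k - 1) (by omega) (by omega) i
    have h2 := hset (k + 1) (by omega) (by omega) i
    have hia : (π.symm i : ℕ) = k - 1 → (π'.symm i : ℕ) = k := by
      intro hi
      have : i = a := by
        rw [ha]
        have : π.symm i = ⟨k - 1, by omega⟩ := Fin.ext (by simpa using hi)
        rw [← this, Equiv.apply_symm_apply]
      rw [this]; exact hsa'
    have hib : (π.symm i : ℕ) = k → (π'.symm i : ℕ) = k - 1 := by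
      intro hi
      have : i = b := by
        rw [hb]
        have : π.symm i = ⟨k, by omega⟩ := Fin.ext (by simpa using hi)
        rw [← this, Equiv.apply_symm_apply]
      rw [this]; exact hsb'
    simp only [flagBarycenter, hε]
    split_ifs <;> first | (exfalso; omega) | norm_num
  have keyfun : flagBarycenter π' ε' ⟨k, by omega⟩ =
      flagBarycenter π ε ⟨k - 1, by omega⟩ + flagBarycenter π ε ⟨k + 1, by omega⟩ -
        flagBarycenter π ε ⟨k, by omega⟩ := funext key
  constructor
  · funext x
    show flagBarycenter π' ε' ⟨k, by omega⟩ x - flagBarycenter π ε (Fin.last m) x =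
      -(flagBarycenter π ε ⟨k, by omega⟩ x - flagBarycenter π ε (Fin.last m) x) +
        (flagBarycenter π ε ⟨k - 1, by omega⟩ x - flagBarycenter π ε (Fin.last m) x) +
        (flagBarycenter π ε ⟨k + 1, by omega⟩ x - flagBarycenter π ε (Fin.last m) x)
    linarith [key x]
  · -- the exterior product part
    have hlast : flagBarycenter π' ε' (Fin.last m) = flagBarycenter π ε (Fin.last m) :=
      (hagree (Fin.last m) (show m ≠ k by omega)).symm
    refine aux_wedge _ _ ⟨k, hkm⟩ ⟨k - 1, by omega⟩
      (flagBarycenter π ε ⟨k + 1, by omega⟩ - flagBarycenter π ε (Fin.last m))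
      (Fin.ne_of_val_ne (show k - 1 ≠ k by omega)) ?_ ?_ ?_
    · intro i hi
      have hik : ((i.castSucc : Fin (m + 1)) : ℕ) ≠ k := by
        simp only [Fin.coe_castSucc]
        intro h; exact hi (Fin.ext h)
      show flagBarycenter π' ε' i.castSucc - flagBarycenter π' ε' (Fin.last m) = _
      rw [hlast, hagree i.castSucc hik]
    · funext x
      show flagBarycenter π' ε' ⟨k, by omega⟩ x - flagBarycenter π' ε' (Fin.last m) x =
        -(flagBarycenter π ε ⟨k, by omega⟩ x - flagBarycenter π ε (Fin.last m) x) +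
          (flagBarycenter π ε ⟨k - 1, by omega⟩ x - flagBarycenter π ε (Fin.last m) x) +
          (flagBarycenter π ε ⟨k + 1, by omega⟩ x - flagBarycenter π ε (Fin.last m) x)
      linarith [key x, congrFun hlast x]
    · by_cases hk1 : k + 1 < m
      · exact Or.inr ⟨⟨k + 1, hk1⟩, Fin.ne_of_val_ne (show k + 1 ≠ k by omega), rfl⟩
      · left
        have h3 : (⟨k + 1, by omega⟩ : Fin (m + 1)) = Fin.last m :=
          Fin.ext (show k + 1 = m by omega)
        rw [h3, sub_self]
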